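/- Let p be prime, a ∈ ℤ_p \ ℤ_{≤0}, and A_k, A^{(1)}_k the coefficients of F_a(t) and F_{a'}(t) (s-fold Pochhammer quotients to the s-th power). Define B_k = (A_k − c^{k/p} A^{(1)}_{k/p})/k for k ≥ 1, where c ∈ 1 + pℤ_p and A^{(1)}_{k/p} = 0 if p ∤ k. Then B_k ∈ ℤ_p for all k ≥ 1. -/

import Mathlib

open Classical

section DworkAux

open Finset

variable {p : ℕ} [hp : Fact p.Prime]

private lemma padic_dvd_natCast_sub {r l : ℕ} (hr : r < p) (hl : l < p) :
    (p : ℤ_[p]) ∣ ((r : ℤ_[p]) - (l : ℤ_[p])) ↔ r = l := by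
  have hcast : ((r : ℤ_[p]) - (l : ℤ_[p])) = (((r : ℤ) - (l : ℤ) : ℤ) : ℤ_[p]) := by
    push_cast; ring
  constructor
  · intro h
    have h1 : ‖(((r : ℤ) - (l : ℤ) : ℤ) : ℤ_[p])‖ < 1 := by
      rw [← hcast]
      exact (PadicInt.norm_lt_one_iff_dvd _).mpr h
    have h2 : (p : ℤ) ∣ ((r : ℤ) - (l : ℤ)) :=
      (PadicInt.norm_int_lt_one_iff_dvd _).mp h1
    have h3 : ((r : ℤ) - (l : ℤ)) = 0 := by
      refine Int.eq_zero_of_abs_lt_dvd h2 ?_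
      rw [abs_lt]
      constructor <;> [skip; skip] <;> omega
    omega
  · rintro rfl; simp

private lemma isUnit_add_iff (b b' : ℤ_[p]) (l : ℕ) (hl : l < p)
    (hb : b + (l : ℤ_[p]) = (p : ℤ_[p]) * b') (j : ℕ) :
    IsUnit (b + (j : ℤ_[p])) ↔ j % p ≠ l := by
  have hj : (j : ℤ_[p]) = (p : ℤ_[p]) * ((j / p : ℕ) : ℤ_[p]) + ((j % p : ℕ) : ℤ_[p]) := by
    have := Nat.div_add_mod j p
    exact_mod_cast congrArg (fun n : ℕ => (n : ℤ_[p])) this.symm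
  have hdecomp : b + (j : ℤ_[p])
      = (p : ℤ_[p]) * (b' + ((j / p : ℕ) : ℤ_[p])) + (((j % p : ℕ) : ℤ_[p]) - (l : ℤ_[p])) := by
    linear_combination hj + hb
  have hpd : (p : ℤ_[p]) ∣ (b + (j : ℤ_[p])) ↔ j % p = l := by
    rw [hdecomp]
    constructor
    · intro h
      have h' : (p : ℤ_[p]) ∣ (((j % p : ℕ) : ℤ_[p]) - (l : ℤ_[p])) :=
        (dvd_add_right (Dvd.intro _ rfl)).mp h
      exact (padic_dvd_natCast_sub (Nat.mod_lt _ hp.out.pos) hl).mp h'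
    · intro h
      rw [h, sub_self, add_zero]
      exact Dvd.intro _ rfl
  constructor
  · intro hu hmod
    have := hpd.mpr hmod
    obtain ⟨w, hw⟩ := this
    have : IsUnit ((p : ℤ_[p])) := isUnit_of_mul_isUnit_left (hw ▸ hu)
    have hn : ‖(p : ℤ_[p])‖ = 1 := PadicInt.isUnit_iff.mp this
    have : ‖(p : ℤ_[p])‖ < 1 := by
      rw [PadicInt.norm_p]
      exact_mod_cast inv_lt_one_of_one_lt₀ (by exact_mod_cast hp.out.one_lt)
    rw [hn] at this
    exact lt_irrefl _ this
  · intro hmod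
    rw [PadicInt.isUnit_iff]
    refine le_antisymm (PadicInt.norm_le_one _) ?_
    by_contra hlt
    push_neg at hlt
    exact hmod (hpd.mp ((PadicInt.norm_lt_one_iff_dvd _).mp hlt))

private lemma isUnit_toZModPow_iff {v : ℕ} (hv : 1 ≤ v) (z : ℤ_[p]) :
    IsUnit (PadicInt.toZModPow v z) ↔ IsUnit z := by
  haveI : Fact (1 < p ^ v) := ⟨Nat.one_lt_pow (by omega) hp.out.one_lt⟩
  constructor
  · intro h
    by_contra hz
    have hnorm : ‖z‖ < 1 := by
      by_contra hn
      push_neg at hn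
      exact hz (PadicInt.isUnit_iff.mpr (le_antisymm (PadicInt.norm_le_one _) hn))
    obtain ⟨w, rfl⟩ := (PadicInt.norm_lt_one_iff_dvd _).mp hnorm
    have hu : IsUnit (PadicInt.toZModPow v (p : ℤ_[p])) :=
      isUnit_of_mul_isUnit_left (by rwa [← map_mul])
    have h0 : (PadicInt.toZModPow v (p : ℤ_[p])) ^ v = 0 := by
      rw [← map_pow, ← RingHom.mem_ker, PadicInt.ker_toZModPow, Ideal.mem_span_singleton]
    have : IsUnit ((0 : ZMod (p ^ v))) := h0 ▸ hu.pow v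
    rw [isUnit_zero_iff] at this
    exact zero_ne_one this
  · exact fun h => h.map _

private lemma block_prod {v : ℕ} (hv : 1 ≤ v) (x : ZMod (p ^ v)) :
    ∏ j ∈ (range (p ^ v)).filter (fun j : ℕ => IsUnit (x + (j : ZMod (p ^ v)))),
      (x + ((j : ℕ) : ZMod (p ^ v)))
      = ∏ y ∈ Finset.univ.filter (fun y : ZMod (p ^ v) => IsUnit y), y := by
  haveI : NeZero (p ^ v) := ⟨pow_ne_zero v hp.out.ne_zero⟩
  refine Finset.prod_nbij' (fun j : ℕ => x + (j : ZMod (p ^ v)))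
    (fun y : ZMod (p ^ v) => (y - x).val) ?_ ?_ ?_ ?_ ?_
  · intro a ha
    simp only [Finset.mem_filter, Finset.mem_range] at ha ⊢
    exact ⟨Finset.mem_univ _, ha.2⟩
  · intro y hy
    simp only [Finset.mem_filter, Finset.mem_range] at hy ⊢
    refine ⟨ZMod.val_lt _, ?_⟩
    rw [ZMod.natCast_zmod_val]
    have : x + (y - x) = y := by ring
    rw [this]
    exact hy.2
  · intro a ha
    simp only [Finset.mem_filter, Finset.mem_range] at ha
    show ((x + (a : ZMod (p ^ v))) - x).val = a
    rw [add_sub_cancel_left]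
    exact ZMod.val_cast_of_lt ha.1
  · intro y hy
    show x + (((y - x).val : ℕ) : ZMod (p ^ v)) = y
    rw [ZMod.natCast_zmod_val]
    ring
  · intro a ha
    rfl

private lemma prod_blocks {M : Type*} [CommMonoid M] (N : ℕ) (f : ℕ → M)
    (hf : ∀ q i, i < N → f (N * q + i) = f i) (q : ℕ) :
    ∏ j ∈ range (N * q), f j = (∏ j ∈ range N, f j) ^ q := by
  induction q with
  | zero => simp
  | succ q ih =>
      rw [Nat.mul_succ, Finset.prod_range_add, ih, pow_succ]
      congr 1
      exact Finset.prod_congr rfl fun i hi => hf q i (Finset.mem_range.mp hi)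

private lemma toZModPow_prod_filter (v : ℕ) (hv : 1 ≤ v) (b b' : ℤ_[p]) (l : ℕ) (hl : l < p)
    (hb : b + (l : ℤ_[p]) = (p : ℤ_[p]) * b') (q : ℕ) :
    PadicInt.toZModPow v
        (∏ j ∈ (range (p ^ v * q)).filter (fun j => j % p ≠ l), (b + (j : ℤ_[p])))
      = (∏ y ∈ Finset.univ.filter (fun y : ZMod (p ^ v) => IsUnit y), y) ^ q := by
  haveI : NeZero (p ^ v) := ⟨pow_ne_zero v hp.out.ne_zero⟩
  set x : ZMod (p ^ v) := PadicInt.toZModPow v b with hx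
  have key : ∀ j : ℕ,
      PadicInt.toZModPow v (b + (j : ℤ_[p])) = x + (j : ZMod (p ^ v)) := by
    intro j; rw [map_add, map_natCast]
  have hcond : ∀ j : ℕ, (j % p ≠ l) ↔ IsUnit (x + (j : ZMod (p ^ v))) := by
    intro j
    rw [← key j, isUnit_toZModPow_iff hv, isUnit_add_iff b b' l hl hb j]
  rw [map_prod, Finset.prod_filter]
  have hφ : ∀ j ∈ range (p ^ v * q),
      (if j % p ≠ l then PadicInt.toZModPow v (b + (j : ℤ_[p])) else 1)
        = (fun j => if j % p ≠ l then x + (j : ZMod (p ^ v)) else 1) j := by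
    intro j _; simp only [key j]
  rw [Finset.prod_congr rfl hφ]
  set f : ℕ → ZMod (p ^ v) := fun j => if j % p ≠ l then x + (j : ZMod (p ^ v)) else 1 with hfdef
  have hper : ∀ q' i, i < p ^ v → f (p ^ v * q' + i) = f i := by
    intro q' i _
    have hdvd : p ∣ p ^ v := dvd_pow_self p (by omega)
    obtain ⟨w, hw⟩ := hdvd
    have hmod : (p ^ v * q' + i) % p = i % p := by
      rw [hw, mul_assoc, mul_comm p (w * q'), add_comm]
      exact Nat.add_mul_mod_self_right i (w * q') p
    have hcast : ((p ^ v * q' + i : ℕ) : ZMod (p ^ v)) = (i : ZMod (p ^ v)) := by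
      rw [Nat.cast_add, Nat.cast_mul, ZMod.natCast_self, zero_mul, zero_add]
    simp only [hfdef, hmod, hcast]
  rw [prod_blocks (p ^ v) f hper q]
  congr 1
  rw [hfdef, ← Finset.prod_filter]
  rw [Finset.filter_congr (fun j _ => by rw [hcond j])]
  exact block_prod hv x

private lemma prod_decomp (b b' : ℤ_[p]) (l : ℕ) (hl : l < p)
    (hb : b + (l : ℤ_[p]) = (p : ℤ_[p]) * b') (m : ℕ) :
    ∏ j ∈ range (p * m), (b + (j : ℤ_[p]))
      = (p : ℤ_[p]) ^ m * (∏ i ∈ range m, (b' + (i : ℤ_[p]))) *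
        ∏ j ∈ (range (p * m)).filter (fun j => j % p ≠ l), (b + (j : ℤ_[p])) := by
  rw [← Finset.prod_filter_mul_prod_filter_not (range (p * m)) (fun j => j % p = l)
    (fun j => b + (j : ℤ_[p]))]
  have hfilters : ((range (p * m)).filter fun j => ¬j % p = l)
      = ((range (p * m)).filter fun j => j % p ≠ l) := rfl
  rw [hfilters]
  congr 1
  have hconst : (p : ℤ_[p]) ^ m * (∏ i ∈ range m, (b' + (i : ℤ_[p])))
      = ∏ i ∈ range m, ((p : ℤ_[p]) * (b' + (i : ℤ_[p]))) := by
    rw [Finset.prod_mul_distrib, Finset.prod_const, Finset.card_range]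
  rw [hconst]
  refine Finset.prod_nbij' (fun j => j / p) (fun i => p * i + l) ?_ ?_ ?_ ?_ ?_
  · intro j hj
    simp only [Finset.mem_filter, Finset.mem_range] at hj ⊢
    exact Nat.div_lt_of_lt_mul hj.1
  · intro i hi
    simp only [Finset.mem_filter, Finset.mem_range] at hi ⊢
    constructor
    · calc p * i + l < p * i + p := by omega
        _ = p * (i + 1) := by ring
        _ ≤ p * m := Nat.mul_le_mul_left p hi
    · rw [Nat.mul_add_mod]
      exact Nat.mod_eq_of_lt hl
  · intro j hj
    simp only [Finset.mem_filter, Finset.mem_range] at hj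
    rw [← hj.2]
    exact Nat.div_add_mod j p
  · intro i hi
    show (p * i + l) / p = i
    rw [Nat.mul_add_div hp.out.pos, Nat.div_eq_of_lt hl, add_zero]
  · intro j hj
    simp only [Finset.mem_filter, Finset.mem_range] at hj
    have hjeq : (j : ℤ_[p]) = (p : ℤ_[p]) * ((j / p : ℕ) : ℤ_[p]) + (l : ℤ_[p]) := by
      have h1 : p * (j / p) + l = j := by rw [← hj.2]; exact Nat.div_add_mod j p
      exact_mod_cast congrArg (fun n : ℕ => (n : ℤ_[p])) h1.symm
    linear_combination hjeq + hb

private lemma ascPochhammer_eval_prod {K : Type*} [CommRing K] (x : K) (n : ℕ) :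
    (ascPochhammer K n).eval x = ∏ j ∈ range n, (x + (j : K)) := by
  induction n with
  | zero => simp [ascPochhammer_zero]
  | succ n ih => rw [ascPochhammer_succ_eval, ih, Finset.prod_range_succ]

private lemma pow_prime_pow_sub_one_dvd (c : ℤ_[p]) (hc : (p : ℤ_[p]) ∣ (c - 1)) (v : ℕ) :
    (p : ℤ_[p]) ^ (v + 1) ∣ c ^ (p ^ v) - 1 := by
  induction v with
  | zero => simpa using hc
  | succ v ih =>
      set y : ℤ_[p] := c ^ (p ^ v) with hy
      have hgeom : c ^ (p ^ (v + 1)) - 1 = (∑ i ∈ range p, y ^ i) * (y - 1) := by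
        rw [geom_sum_mul, hy, ← pow_mul, ← pow_succ]
      rw [hgeom, pow_succ, mul_comm ((p : ℤ_[p]) ^ (v + 1)) (p : ℤ_[p])]
      refine mul_dvd_mul ?_ ih
      have hy1 : (p : ℤ_[p]) ∣ y - 1 := by
        refine dvd_trans hc ?_
        have := sub_dvd_pow_sub_pow c 1 (p ^ v)
        simpa using this
      have hsum : (∑ i ∈ range p, y ^ i) = (∑ i ∈ range p, (y ^ i - 1)) + (p : ℤ_[p]) := by
        rw [Finset.sum_sub_distrib, Finset.sum_const, Finset.card_range]
        push_cast
        ring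
      rw [hsum]
      refine dvd_add (Finset.dvd_sum fun i _ => ?_) dvd_rfl
      refine dvd_trans hy1 ?_
      have := sub_dvd_pow_sub_pow y 1 i
      simpa using this

end DworkAux

/-- Integrality of the coefficients `B_k = (A_k - c^{k/p} A^{(1)}_{k/p})/k` of
`G^{(σ)}_a(t)` (part of Lemma 2.2 of the paper): for `a ∈ ℤ_p \ ℤ_{≤0}`,
`c ∈ 1 + pℤ_p`, `A_k = ((a)_k/k!)^s`, `A^{(1)}_k = ((a')_k/k!)^s` (with `a'`
the Dwork prime and the convention `A^{(1)}_{k/p} = 0` if `p ∤ k`), one has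
`B_k ∈ ℤ_p` for all `k ≥ 1`. -/
theorem B_coeff_mem_padicInt (p s : ℕ) [Fact p.Prime] (hs : 1 ≤ s)
    (a a' : ℤ_[p]) (ha : ∀ m : ℕ, a ≠ -(m : ℤ_[p]))
    (l : ℕ) (hl : l < p) (hla : a + (l : ℤ_[p]) = (p : ℤ_[p]) * a')
    (c : ℤ_[p]) (hc : (p : ℤ_[p]) ∣ (c - 1))
    (A A1 : ℕ → ℤ_[p])
    (hA : ∀ k, (A k : ℚ_[p]) =
      ((ascPochhammer ℚ_[p] k).eval (a : ℚ_[p]) / (k.factorial : ℚ_[p])) ^ s)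
    (hA1 : ∀ k, (A1 k : ℚ_[p]) =
      ((ascPochhammer ℚ_[p] k).eval (a' : ℚ_[p]) / (k.factorial : ℚ_[p])) ^ s)
    (k : ℕ) (hk : 1 ≤ k) :
    ∃ B : ℤ_[p], (k : ℤ_[p]) * B
      = A k - (if p ∣ k then c ^ (k / p) * A1 (k / p) else 0) := by
  have hpp : p.Prime := Fact.out
  have hp2 : 2 ≤ p := hpp.two_le
  have hk0 : k ≠ 0 := by omega
  by_cases hpk : p ∣ k
  case neg =>
    rw [if_neg hpk, sub_zero]
    have hk_unit : IsUnit ((k : ℤ_[p])) := by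
      rw [PadicInt.isUnit_iff]
      refine le_antisymm (PadicInt.norm_le_one _) ?_
      by_contra hlt
      push_neg at hlt
      have hd : (p : ℤ_[p]) ∣ ((k : ℤ) : ℤ_[p]) := by
        rw [Int.cast_natCast]
        exact (PadicInt.norm_lt_one_iff_dvd _).mp hlt
      have : (p : ℤ) ∣ (k : ℤ) := by
        rw [← PadicInt.norm_int_lt_one_iff_dvd]
        exact (PadicInt.norm_lt_one_iff_dvd _).mpr hd
      exact hpk (Int.ofNat_dvd.mp this)
    obtain ⟨uu, huu⟩ := hk_unit
    refine ⟨↑uu⁻¹ * A k, ?_⟩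
    rw [← huu, ← mul_assoc, Units.mul_inv, one_mul]
  case pos =>
    rw [if_pos hpk]
    set m : ℕ := k / p with hmdef
    have hm : k = p * m := (Nat.mul_div_cancel' hpk).symm
    set v : ℕ := k.factorization p with hvdef
    have hv1 : 1 ≤ v := hpp.factorization_pos_of_dvd hk0 hpk
    set u : ℕ := k / p ^ v with hudef
    have hku : p ^ v * u = k := Nat.ordProj_mul_ordCompl_eq_self k p
    have hpu : ¬ p ∣ u := Nat.not_dvd_ordCompl hpp hk0
    have hpvk : p ^ v ∣ k := Nat.ordProj_dvd k p
    have hpv1m : p ^ (v - 1) ∣ m := by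
      have h1 : p ^ v ∣ p * m := hm ▸ hpvk
      have hv' : v = (v - 1) + 1 := by omega
      rw [hv', pow_succ, mul_comm] at h1
      exact (Nat.mul_dvd_mul_iff_left hpp.pos).mp h1
    -- the two filtered products
    set Na : ℤ_[p] :=
      ∏ j ∈ (Finset.range k).filter (fun j => j % p ≠ l), (a + (j : ℤ_[p])) with hNa
    have hp1l : p - 1 < p := by omega
    have h1b : (1 : ℤ_[p]) + ((p - 1 : ℕ) : ℤ_[p]) = (p : ℤ_[p]) * 1 := by
      have hcast : ((p - 1 : ℕ) : ℤ_[p]) = (p : ℤ_[p]) - 1 := by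
        push_cast [Nat.cast_sub hpp.one_le]
        ring
      rw [hcast]
      ring
    set N1 : ℤ_[p] :=
      ∏ j ∈ (Finset.range k).filter (fun j => j % p ≠ (p - 1)), ((1 : ℤ_[p]) + (j : ℤ_[p]))
      with hN1
    -- congruence between the two filtered products
    have hcong : (p : ℤ_[p]) ^ v ∣ Na - N1 := by
      have hφa := toZModPow_prod_filter v hv1 a a' l hl hla u
      have hφ1 := toZModPow_prod_filter v hv1 1 1 (p - 1) hp1l h1b u
      rw [hku] at hφa hφ1
      have h0 : PadicInt.toZModPow v (Na - N1) = 0 := by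
        rw [map_sub, hNa, hN1, hφa, hφ1, sub_self]
      rwa [← RingHom.mem_ker, PadicInt.ker_toZModPow, Ideal.mem_span_singleton] at h0
    -- N1 is a unit
    have hN1unit : IsUnit N1 := by
      rw [hN1]
      refine Finset.prod_induction _ IsUnit (fun _ _ => IsUnit.mul) isUnit_one ?_
      intro j hj
      rw [Finset.mem_filter] at hj
      exact (isUnit_add_iff 1 1 (p - 1) hp1l h1b j).mpr hj.2
    -- product decompositions
    have hd := prod_decomp a a' l hl hla m
    have hd1 := prod_decomp 1 1 (p - 1) hp1l h1b m
    rw [← hm] at hd hd1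
    have hfact : ∀ n : ℕ, ∏ j ∈ Finset.range n, ((1 : ℤ_[p]) + (j : ℤ_[p]))
        = (n.factorial : ℤ_[p]) := by
      intro n
      calc ∏ j ∈ Finset.range n, ((1 : ℤ_[p]) + (j : ℤ_[p]))
          = ∏ j ∈ Finset.range n, (((j + 1 : ℕ)) : ℤ_[p]) := by
            refine Finset.prod_congr rfl fun j _ => ?_
            push_cast
            ring
        _ = ((∏ j ∈ Finset.range n, (j + 1) : ℕ) : ℤ_[p]) := by rw [Nat.cast_prod]
        _ = _ := by rw [Finset.prod_range_add_one_eq_factorial]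
    rw [hfact k, hfact m] at hd1
    -- cast products to ℚ_[p]
    have cast_prod : ∀ (z : ℤ_[p]) (n : ℕ),
        (((∏ j ∈ Finset.range n, (z + (j : ℤ_[p])) : ℤ_[p])) : ℚ_[p])
          = ∏ j ∈ Finset.range n, ((z : ℚ_[p]) + (j : ℚ_[p])) := by
      intro z n
      induction n with
      | zero => simp
      | succ n ih =>
          rw [Finset.prod_range_succ, Finset.prod_range_succ, ← ih]
          push_cast
          ring
    rw [← hNa] at hd
    rw [← hN1] at hd1
    have hdQ := congrArg (fun z : ℤ_[p] => (z : ℚ_[p])) hd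
    simp only [PadicInt.coe_mul, PadicInt.coe_pow, PadicInt.coe_natCast] at hdQ
    rw [cast_prod a k, cast_prod a' m] at hdQ
    have hfQ := congrArg (fun z : ℤ_[p] => (z : ℚ_[p])) hd1
    simp only [PadicInt.coe_mul, PadicInt.coe_pow, PadicInt.coe_natCast] at hfQ
    -- the key multiplicative identity
    have hAN : A k * N1 ^ s = A1 m * Na ^ s := by
      have hp0 : (p : ℚ_[p]) ≠ 0 := Nat.cast_ne_zero.mpr hpp.ne_zero
      have hm0 : ((m.factorial : ℕ) : ℚ_[p]) ≠ 0 :=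
        Nat.cast_ne_zero.mpr m.factorial_ne_zero
      have hN10 : (N1 : ℚ_[p]) ≠ 0 := PadicInt.coe_ne_zero.mpr hN1unit.ne_zero
      have hq : (A k : ℚ_[p]) * (N1 : ℚ_[p]) ^ s = (A1 m : ℚ_[p]) * (Na : ℚ_[p]) ^ s := by
        rw [hA k, hA1 m, ascPochhammer_eval_prod ((a : ℚ_[p])) k,
          ascPochhammer_eval_prod ((a' : ℚ_[p])) m, hdQ, hfQ]
        field_simp
        rw [← mul_pow, ← mul_pow]
        congr 1
        rw [div_mul_eq_mul_div, mul_div_mul_right _ _ hN10, mul_div_right_comm]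
      apply Subtype.coe_injective
      show ((A k * N1 ^ s : ℤ_[p]) : ℚ_[p]) = ((A1 m * Na ^ s : ℤ_[p]) : ℚ_[p])
      simp only [PadicInt.coe_mul, PadicInt.coe_pow]
      exact hq
    -- p^v divides A k - A1 m
    have h4 : N1 ^ s * (A k - A1 m) = A1 m * (Na ^ s - N1 ^ s) := by
      linear_combination hAN
    have h5 : (p : ℤ_[p]) ^ v ∣ Na ^ s - N1 ^ s :=
      dvd_trans hcong (sub_dvd_pow_sub_pow Na N1 s)
    have h6 : (p : ℤ_[p]) ^ v ∣ N1 ^ s * (A k - A1 m) := by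
      rw [h4]
      exact Dvd.dvd.mul_left h5 _
    obtain ⟨w1, hw1⟩ := hN1unit.pow s
    have h7 : (p : ℤ_[p]) ^ v ∣ A k - A1 m := by
      have heq : A k - A1 m = ↑w1⁻¹ * (N1 ^ s * (A k - A1 m)) := by
        rw [← hw1, ← mul_assoc, Units.inv_mul, one_mul]
      rw [heq]
      exact Dvd.dvd.mul_left h6 _
    -- p^v divides c^m - 1
    have h8 : (p : ℤ_[p]) ^ v ∣ c ^ (p ^ (v - 1)) - 1 := by
      have h := pow_prime_pow_sub_one_dvd c hc (v - 1)
      rwa [Nat.sub_add_cancel hv1] at h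
    obtain ⟨t, ht⟩ := hpv1m
    have h9 : (p : ℤ_[p]) ^ v ∣ c ^ m - 1 := by
      refine dvd_trans h8 ?_
      have h := sub_dvd_pow_sub_pow (c ^ (p ^ (v - 1))) 1 t
      rwa [← pow_mul, one_pow, ← ht] at h
    -- conclude
    have h10 : (p : ℤ_[p]) ^ v ∣ A k - c ^ m * A1 m := by
      have heq : A k - c ^ m * A1 m = (A k - A1 m) - (c ^ m - 1) * A1 m := by ring
      rw [heq]
      exact dvd_sub h7 (Dvd.dvd.mul_right h9 _)
    obtain ⟨y, hy⟩ := h10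
    have hu_unit : IsUnit ((u : ℤ_[p])) := by
      rw [PadicInt.isUnit_iff]
      refine le_antisymm (PadicInt.norm_le_one _) ?_
      by_contra hlt
      push_neg at hlt
      have hdvd : (p : ℤ_[p]) ∣ ((u : ℤ) : ℤ_[p]) := by
        rw [Int.cast_natCast]
        exact (PadicInt.norm_lt_one_iff_dvd _).mp hlt
      have : (p : ℤ) ∣ (u : ℤ) := by
        rw [← PadicInt.norm_int_lt_one_iff_dvd]
        exact (PadicInt.norm_lt_one_iff_dvd _).mpr hdvd
      exact hpu (Int.ofNat_dvd.mp this)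
    obtain ⟨uu, huu⟩ := hu_unit
    refine ⟨↑uu⁻¹ * y, ?_⟩
    have hkc : (k : ℤ_[p]) = (p : ℤ_[p]) ^ v * (u : ℤ_[p]) := by
      rw [← hku]
      push_cast
      ring
    rw [hkc, ← huu, hy]
    rw [mul_assoc, ← mul_assoc (↑uu : ℤ_[p]), Units.mul_inv, one_mul]
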